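/- There exists an absolute constant K > 0 with the following property. Let (Ω, F, P) be a probability space, let T be a countable set equipped with a pseudometric d of finite diameter, and let {X_t : t ∈ T} be a family of real random variables such that X_s = X_t almost surely whenever d(s, t) = 0 and P(|X_s − X_t| > z) ≤ 2·exp(−z²/(2 d(s,t)²)) for all s, t ∈ T with d(s,t) > 0 and all z > 0. Then the Orlicz ψ₂-norm of sup_{s,t ∈ T} |X_s − X_t| satisfies ‖ sup_{s,t ∈ T} |X_s − X_t| ‖_{ψ₂} ≤ K ∫₀^{diam T} √(log D(ε, T, d)) dε, where the integral is interpreted as +∞ if the integrand fails to be integrable. -/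

import Mathlib

open MeasureTheory
open scoped ENNReal

universe u v

/-- The Orlicz `ψ₂`-norm of a real random variable `X`, where `ψ₂(t) = exp(t²) − 1`:
`‖X‖_{ψ₂} = inf {C > 0 : E[ψ₂(|X|/C)] ≤ 1}`, valued in `ℝ≥0∞` so that the infimum of the
empty set is `+∞`. -/
noncomputable def psi2Norm {Ω : Type u} [MeasurableSpace Ω] (μ : Measure Ω) (X : Ω → ℝ) :
    ℝ≥0∞ :=
  sInf (ENNReal.ofReal ''
    {C : ℝ | 0 < C ∧ ∫⁻ ω, ENNReal.ofReal (Real.exp ((|X ω| / C) ^ 2) - 1) ∂μ ≤ 1})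

/-- The square-root packing entropy `√(log D(ε, T, d))` of a pseudometric space `T`, valued
in `ℝ≥0∞`: the supremum over all finite `ε`-separated subsets `S ⊆ T` (i.e. sets whose
distinct points are at distance `> ε`) of `√(log #S)`; it equals `+∞` when the packing
number `D(ε, T, d)` is infinite. -/
noncomputable def sqrtLogPacking (T : Type v) [PseudoMetricSpace T] (ε : ℝ) : ℝ≥0∞ :=
  ⨆ (S : Finset T) (_ : ∀ s ∈ S, ∀ t ∈ S, s ≠ t → ε < dist s t),
    ENNReal.ofReal (Real.sqrt (Real.log (S.card : ℝ)))

open Real Set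

lemma tail_to_psi2 {Ω : Type*} [MeasurableSpace Ω] (μ : Measure Ω) [IsProbabilityMeasure μ]
    (Y : Ω → ℝ) (hY : Measurable Y) {A β : ℝ} (hA : 1 ≤ A) (hβ : 0 < β)
    (htail : ∀ t : ℝ, 0 < t → μ {ω | t < |Y ω|} ≤ ENNReal.ofReal (A * Real.exp (-β * t ^ 2))) :
    ∫⁻ ω, ENNReal.ofReal
        (Real.exp ((|Y ω| / (2 * Real.sqrt ((1 + Real.log A) / β))) ^ 2) - 1) ∂μ ≤ 1 := by
  have hlogA : 0 ≤ Real.log A := Real.log_nonneg hA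
  have h1A : (0:ℝ) < 1 + Real.log A := by linarith
  set C : ℝ := 2 * Real.sqrt ((1 + Real.log A) / β) with hCdef
  have hC : 0 < C := by positivity
  have hC2 : C ^ 2 = 4 * ((1 + Real.log A) / β) := by
    rw [hCdef, mul_pow, Real.sq_sqrt (by positivity)]; ring
  have hC2pos : 0 < C ^ 2 := by positivity
  set θ : ℝ := 1 / (1 + Real.log A) with hθdef
  have hθpos : 0 < θ := by positivity
  have hθ1 : θ ≤ 1 := by
    rw [hθdef, div_le_one h1A]; linarith
  set α : ℝ := θ * β - 1 / C ^ 2 with hαdef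
  have hαval : α = 3 / 4 * (β / (1 + Real.log A)) := by
    rw [hαdef, hθdef, hC2]; field_simp; ring
  have hαpos : 0 < α := by rw [hαval]; positivity
  set g : ℝ → ℝ := fun t => 2 * t / C ^ 2 * Real.exp (t ^ 2 / C ^ 2) with hgdef
  have hgcont : Continuous g := by
    apply Continuous.mul
    · exact (continuous_const.mul continuous_id).div_const _
    · exact Real.continuous_exp.comp ((continuous_pow 2).div_const _)
  have hFderiv : ∀ x : ℝ, HasDerivAt (fun t => Real.exp (t ^ 2 / C ^ 2)) (g x) x := by
    intro x
    have h1 : HasDerivAt (fun t : ℝ => t ^ 2 / C ^ 2) (2 * x / C ^ 2) x := by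
      have := (hasDerivAt_pow 2 x).div_const (C ^ 2)
      simpa [pow_one] using this
    simpa [hgdef, mul_comm] using h1.exp
  have hprim : ∀ x : ℝ, ∫ t in (0:ℝ)..x, g t = Real.exp ((x / C) ^ 2) - 1 := by
    intro x
    have := intervalIntegral.integral_eq_sub_of_hasDerivAt
      (f := fun t => Real.exp (t ^ 2 / C ^ 2)) (f' := g)
      (fun t _ => hFderiv t) (hgcont.intervalIntegrable 0 x)
    rw [this]
    rw [div_pow]
    norm_num
  -- layer cake
  have hYabs : 0 ≤ᵐ[μ] fun ω => |Y ω| := Filter.Eventually.of_forall fun ω => abs_nonneg _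
  have layer := lintegral_comp_eq_lintegral_meas_lt_mul μ (f := fun ω => |Y ω|) (g := g)
      hYabs (hY.abs.aemeasurable)
      (fun t _ => hgcont.intervalIntegrable 0 t)
      (by
        filter_upwards [ae_restrict_mem measurableSet_Ioi] with t ht
        have : (0:ℝ) < t := ht
        have : 0 ≤ 2 * t / C ^ 2 := by positivity
        exact mul_nonneg this (Real.exp_nonneg _))
  have hLHS : ∫⁻ ω, ENNReal.ofReal (Real.exp ((|Y ω| / C) ^ 2) - 1) ∂μ
      = ∫⁻ t in Ioi (0:ℝ), μ {a | t < |Y a|} * ENNReal.ofReal (g t) := by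
    rw [← layer]
    apply lintegral_congr fun ω => by rw [hprim]
  rw [hLHS]
  -- bound integrand
  set h : ℝ → ℝ := fun t => Real.exp (θ * Real.log A) * (2 * t) * Real.exp (-α * t ^ 2) / C ^ 2
      with hhdef
  have hbound : ∀ t ∈ Ioi (0:ℝ),
      μ {a | t < |Y a|} * ENNReal.ofReal (g t) ≤ ENNReal.ofReal (h t) := by
    intro t ht
    have ht0 : (0:ℝ) < t := ht
    have hmu : μ {a | t < |Y a|} ≤ ENNReal.ofReal (Real.exp (θ * (Real.log A - β * t ^ 2))) := by
      rcases le_or_gt (Real.log A - β * t ^ 2) 0 with hu | hu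
      · refine (htail t ht0).trans ?_
        apply ENNReal.ofReal_le_ofReal
        have hAe : A * Real.exp (-β * t ^ 2) = Real.exp (Real.log A - β * t ^ 2) := by
          rw [Real.exp_sub, Real.exp_log (by linarith), div_eq_mul_inv, ← Real.exp_neg, neg_mul]
        rw [hAe]
        apply Real.exp_le_exp.2
        nlinarith [hu, hθpos, hθ1]
      · calc μ {a | t < |Y a|} ≤ 1 := prob_le_one
          _ ≤ ENNReal.ofReal (Real.exp (θ * (Real.log A - β * t ^ 2))) := by
              rw [show (1:ℝ≥0∞) = ENNReal.ofReal 1 by simp]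
              apply ENNReal.ofReal_le_ofReal
              rw [← Real.exp_zero]
              apply Real.exp_le_exp.2
              positivity
    calc μ {a | t < |Y a|} * ENNReal.ofReal (g t)
        ≤ ENNReal.ofReal (Real.exp (θ * (Real.log A - β * t ^ 2))) * ENNReal.ofReal (g t) := by
          gcongr
      _ = ENNReal.ofReal (Real.exp (θ * (Real.log A - β * t ^ 2)) * g t) := by
          rw [← ENNReal.ofReal_mul (Real.exp_nonneg _)]
      _ ≤ ENNReal.ofReal (h t) := by
          apply ENNReal.ofReal_le_ofReal
          rw [hhdef, hgdef]
          have : Real.exp (θ * (Real.log A - β * t ^ 2)) * (2 * t / C ^ 2 * Real.exp (t ^ 2 / C ^ 2))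
              = Real.exp (θ * Real.log A) * (2 * t) * (Real.exp (- θ * β * t^2) * Real.exp (t ^ 2 / C ^ 2)) / C ^ 2 := by
            rw [show θ * (Real.log A - β * t ^ 2) = θ * Real.log A + (- θ * β * t ^ 2) by ring,
              Real.exp_add]
            ring
          rw [this, ← Real.exp_add]
          have : -θ * β * t ^ 2 + t ^ 2 / C ^ 2 = -α * t ^ 2 := by
            rw [hαdef]; field_simp; ring
          rw [this]
  -- antiderivative for h
  set G : ℝ → ℝ := fun t => -(Real.exp (θ * Real.log A) / (α * C ^ 2)) * Real.exp (-α * t ^ 2)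
    with hGdef
  have hGderiv : ∀ x : ℝ, HasDerivAt G (h x) x := by
    intro x
    have h1 : HasDerivAt (fun t : ℝ => -α * t ^ 2) (-α * (2 * x)) x := by
      have := (hasDerivAt_pow 2 x).const_mul (-α)
      simpa [pow_one, mul_comm] using this
    have h2 := (h1.exp).const_mul (-(Real.exp (θ * Real.log A) / (α * C ^ 2)))
    refine h2.congr_deriv ?_
    rw [hhdef]
    field_simp
  have hGtend : Filter.Tendsto G Filter.atTop (nhds 0) := by
    rw [show (0:ℝ) = -(Real.exp (θ * Real.log A) / (α * C ^ 2)) * 0 by ring]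
    apply Filter.Tendsto.const_mul
    apply Real.tendsto_exp_atBot.comp
    apply Filter.Tendsto.const_mul_atTop_of_neg (by linarith : -α < 0)
    exact Filter.tendsto_pow_atTop (by norm_num)
  have hnn : ∀ x ∈ Ioi (0:ℝ), 0 ≤ h x := by
    intro x hx
    have : (0:ℝ) < x := hx
    rw [hhdef]
    positivity
  have hint : IntegrableOn h (Ioi (0:ℝ)) volume :=
    integrableOn_Ioi_deriv_of_nonneg (hGderiv 0).continuousAt.continuousWithinAt
      (fun x hx => hGderiv x) hnn hGtend
  have hval : ∫ x in Ioi (0:ℝ), h x = Real.exp (θ * Real.log A) / (α * C ^ 2) := by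
    rw [integral_Ioi_of_hasDerivAt_of_nonneg (hGderiv 0).continuousAt.continuousWithinAt
      (fun x hx => hGderiv x) hnn hGtend]
    rw [hGdef]
    norm_num
  calc ∫⁻ t in Ioi (0:ℝ), μ {a | t < |Y a|} * ENNReal.ofReal (g t)
      ≤ ∫⁻ t in Ioi (0:ℝ), ENNReal.ofReal (h t) := by
        apply lintegral_mono_ae
        filter_upwards [ae_restrict_mem measurableSet_Ioi] with t ht
        exact hbound t ht
    _ = ENNReal.ofReal (∫ t in Ioi (0:ℝ), h t) := by
        rw [← ofReal_integral_eq_lintegral_ofReal hint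
          ((ae_restrict_mem measurableSet_Ioi).mono hnn)]
    _ ≤ 1 := by
        rw [hval]
        rw [show (1:ℝ≥0∞) = ENNReal.ofReal 1 by simp]
        apply ENNReal.ofReal_le_ofReal
        rw [div_le_one (by positivity)]
        have hαC2 : α * C ^ 2 = 3 := by
          rw [hαval, hC2]; field_simp
        rw [hαC2]
        have : θ * Real.log A ≤ 1 := by
          rw [hθdef]
          rw [div_mul_eq_mul_div, div_le_one h1A]
          linarith
        calc Real.exp (θ * Real.log A) ≤ Real.exp 1 := Real.exp_le_exp.2 this
          _ ≤ 3 := by linarith [Real.exp_one_lt_d9]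

lemma sqrt_add_le' (x y : ℝ) (hx : 0 ≤ x) (hy : 0 ≤ y) :
    Real.sqrt (x + y) ≤ Real.sqrt x + Real.sqrt y := by
  have h : x + y ≤ (Real.sqrt x + Real.sqrt y) ^ 2 := by
    nlinarith [Real.sq_sqrt hx, Real.sq_sqrt hy, Real.sqrt_nonneg x, Real.sqrt_nonneg y,
      mul_nonneg (Real.sqrt_nonneg x) (Real.sqrt_nonneg y)]
  calc Real.sqrt (x + y) ≤ Real.sqrt ((Real.sqrt x + Real.sqrt y) ^ 2) := Real.sqrt_le_sqrt h
    _ = Real.sqrt x + Real.sqrt y := Real.sqrt_sq (by positivity)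

lemma convexOn_exp_sq : ConvexOn ℝ univ (fun x : ℝ => Real.exp (x ^ 2)) := by
  have h1 : ConvexOn ℝ univ (fun x : ℝ => x ^ 2) := Even.convexOn_pow even_two
  have himg : (fun x : ℝ => x ^ 2) '' univ = Ici 0 := by
    rw [Set.image_univ]
    ext y
    simp only [Set.mem_range, Set.mem_Ici]
    constructor
    · rintro ⟨x, rfl⟩; exact sq_nonneg x
    · intro hy; exact ⟨Real.sqrt y, Real.sq_sqrt hy⟩
  have hg : ConvexOn ℝ ((fun x : ℝ => x ^ 2) '' univ) Real.exp := by
    rw [himg]; exact convexOn_exp.subset (subset_univ _) (convex_Ici 0)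
  have hm : MonotoneOn Real.exp ((fun x : ℝ => x ^ 2) '' univ) :=
    Real.exp_monotone.monotoneOn _
  exact hg.comp h1 hm

lemma key_convex {x y a b : ℝ} (ha : 0 < a) (hb : 0 < b) :
    Real.exp (((x + y) / (a + b)) ^ 2) - 1 ≤
      a / (a + b) * (Real.exp ((x / a) ^ 2) - 1) + b / (a + b) * (Real.exp ((y / b) ^ 2) - 1) := by
  have hab : 0 < a + b := by linarith
  have h := convexOn_exp_sq.2 (mem_univ (x / a)) (mem_univ (y / b))
    (by positivity : (0:ℝ) ≤ a / (a + b)) (by positivity : (0:ℝ) ≤ b / (a + b))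
    (by field_simp)
  simp only [smul_eq_mul] at h
  have heq : a / (a + b) * (x / a) + b / (a + b) * (y / b) = (x + y) / (a + b) := by
    field_simp
  rw [heq] at h
  have hsum : a / (a + b) + b / (a + b) = 1 := by field_simp
  nlinarith [h]

lemma measurable_finset_sup' {Ω ι : Type*} [MeasurableSpace Ω] {s : Finset ι} (hs : s.Nonempty)
    (f : ι → Ω → ℝ) (hf : ∀ i, Measurable (f i)) :
    Measurable (fun ω => s.sup' hs (fun i => f i ω)) := by
  induction hs using Finset.Nonempty.cons_induction with
  | singleton a => simpa using hf a
  | cons a s ha hs ih =>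
      have : (fun ω => (Finset.cons a s ha).sup' (Finset.cons_nonempty ha) fun i => f i ω)
          = fun ω => f a ω ⊔ s.sup' hs fun i => f i ω := by
        funext ω
        exact Finset.sup'_cons (f := fun i => f i ω) hs
      rw [this]
      exact (hf a).sup ih

lemma psi2_add {Ω : Type*} [MeasurableSpace Ω] (μ : Measure Ω)
    {f g : Ω → ℝ} (hf : Measurable f) (hg : Measurable g)
    (hf0 : ∀ ω, 0 ≤ f ω) (hg0 : ∀ ω, 0 ≤ g ω) {a b : ℝ} (ha : 0 < a) (hb : 0 < b)
    (h1 : ∫⁻ ω, ENNReal.ofReal (Real.exp ((f ω / a) ^ 2) - 1) ∂μ ≤ 1)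
    (h2 : ∫⁻ ω, ENNReal.ofReal (Real.exp ((g ω / b) ^ 2) - 1) ∂μ ≤ 1) :
    ∫⁻ ω, ENNReal.ofReal (Real.exp (((f ω + g ω) / (a + b)) ^ 2) - 1) ∂μ ≤ 1 := by
  have hab : 0 < a + b := by linarith
  have hmf : Measurable fun ω => ENNReal.ofReal (Real.exp ((f ω / a) ^ 2) - 1) :=
    ENNReal.measurable_ofReal.comp
      ((Real.measurable_exp.comp ((hf.div_const a).pow_const 2)).sub measurable_const)
  have hmg : Measurable fun ω => ENNReal.ofReal (Real.exp ((g ω / b) ^ 2) - 1) :=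
    ENNReal.measurable_ofReal.comp
      ((Real.measurable_exp.comp ((hg.div_const b).pow_const 2)).sub measurable_const)
  have hexp1 : ∀ x : ℝ, 0 ≤ Real.exp (x ^ 2) - 1 := by
    intro x
    have : (1:ℝ) = Real.exp 0 := by simp
    rw [this]
    have := Real.exp_le_exp.2 (sq_nonneg x)
    simp only [Real.exp_zero] at this ⊢
    linarith [Real.exp_le_exp.2 (sq_nonneg x), Real.exp_zero]
  calc ∫⁻ ω, ENNReal.ofReal (Real.exp (((f ω + g ω) / (a + b)) ^ 2) - 1) ∂μ
      ≤ ∫⁻ ω, (ENNReal.ofReal (a / (a + b)) * ENNReal.ofReal (Real.exp ((f ω / a) ^ 2) - 1)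
          + ENNReal.ofReal (b / (a + b)) * ENNReal.ofReal (Real.exp ((g ω / b) ^ 2) - 1)) ∂μ := by
        apply lintegral_mono
        intro ω
        beta_reduce
        refine le_trans (ENNReal.ofReal_le_ofReal (key_convex ha hb)) ?_
        rw [ENNReal.ofReal_add (mul_nonneg (by positivity) (hexp1 _))
            (mul_nonneg (by positivity) (hexp1 _)),
          ENNReal.ofReal_mul (by positivity), ENNReal.ofReal_mul (by positivity)]
    _ = ENNReal.ofReal (a / (a + b)) * ∫⁻ ω, ENNReal.ofReal (Real.exp ((f ω / a) ^ 2) - 1) ∂μ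
          + ENNReal.ofReal (b / (a + b)) * ∫⁻ ω, ENNReal.ofReal (Real.exp ((g ω / b) ^ 2) - 1) ∂μ := by
        rw [lintegral_add_left (hmf.const_mul _), lintegral_const_mul _ hmf,
          lintegral_const_mul _ hmg]
    _ ≤ ENNReal.ofReal (a / (a + b)) * 1 + ENNReal.ofReal (b / (a + b)) * 1 := by gcongr
    _ = ENNReal.ofReal (a / (a + b) + b / (a + b)) := by
        rw [mul_one, mul_one, ENNReal.ofReal_add (by positivity) (by positivity)]
    _ ≤ 1 := by
        rw [show a / (a + b) + b / (a + b) = 1 by field_simp]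
        simp

lemma psi2_sum {Ω ι : Type*} [MeasurableSpace Ω] (μ : Measure Ω)
    {s : Finset ι} (hs : s.Nonempty) (f : ι → Ω → ℝ) (C : ι → ℝ)
    (hf : ∀ i, Measurable (f i)) (hf0 : ∀ i ω, 0 ≤ f i ω)
    (hC : ∀ i, 0 < C i)
    (h1 : ∀ i ∈ s, ∫⁻ ω, ENNReal.ofReal (Real.exp ((f i ω / C i) ^ 2) - 1) ∂μ ≤ 1) :
    ∫⁻ ω, ENNReal.ofReal (Real.exp (((∑ i ∈ s, f i ω) / ∑ i ∈ s, C i) ^ 2) - 1) ∂μ ≤ 1 := by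
  induction hs using Finset.Nonempty.cons_induction with
  | singleton a =>
      simp only [Finset.sum_singleton]
      exact h1 a (Finset.mem_singleton_self a)
  | cons a t ha hts ih =>
      have hstep := psi2_add (μ := μ)
        (g := fun ω => ∑ i ∈ t, f i ω) (hf a)
        (by exact Finset.measurable_sum t fun i _ => hf i)
        (hf0 a) (fun ω => Finset.sum_nonneg fun i _ => hf0 i ω)
        (hC a) (Finset.sum_pos (fun i _ => hC i) hts)
        (h1 a (Finset.mem_cons_self a t))
        (ih (fun i hi => h1 i (Finset.mem_cons_of_mem hi)))
      simpa only [Finset.sum_cons] using hstep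

lemma exists_net {T : Type*} [PseudoMetricSpace T] (F : Finset T) (hF : F.Nonempty)
    {ε : ℝ} (hε : 0 < ε) :
    ∃ N : Finset T, N ⊆ F ∧ N.Nonempty ∧
      (∀ u ∈ N, ∀ v ∈ N, u ≠ v → ε < dist u v) ∧
      (∀ t ∈ F, ∃ u ∈ N, dist t u ≤ ε) := by
  classical
  set 𝒮 : Finset (Finset T) := F.powerset.filter
    (fun S => S.Nonempty ∧ ∀ u ∈ S, ∀ v ∈ S, u ≠ v → ε < dist u v) with h𝒮
  have hmem : ∀ S, S ∈ 𝒮 ↔ S ⊆ F ∧ S.Nonempty ∧ ∀ u ∈ S, ∀ v ∈ S, u ≠ v → ε < dist u v := by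
    intro S
    simp [h𝒮, Finset.mem_filter, Finset.mem_powerset, and_assoc]
  have h𝒮ne : 𝒮.Nonempty := by
    obtain ⟨a, haF⟩ := hF
    refine ⟨{a}, (hmem _).2 ⟨Finset.singleton_subset_iff.2 haF, Finset.singleton_nonempty a, ?_⟩⟩
    intro u hu v hv huv
    rw [Finset.mem_singleton] at hu hv
    exact absurd (hu.trans hv.symm) huv
  obtain ⟨N, hN𝒮, hNmax⟩ := 𝒮.exists_max_image (fun S => S.card) h𝒮ne
  obtain ⟨hNF, hNne, hNsep⟩ := (hmem N).1 hN𝒮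
  refine ⟨N, hNF, hNne, hNsep, ?_⟩
  intro t htF
  by_contra hcon
  push_neg at hcon
  have htN : t ∉ N := fun h => by
    have := hcon t h
    simp [dist_self] at this
    linarith
  have hins : insert t N ∈ 𝒮 := by
    refine (hmem _).2 ⟨Finset.insert_subset htF hNF, Finset.insert_nonempty _ _, ?_⟩
    intro u hu v hv huv
    rw [Finset.mem_insert] at hu hv
    rcases hu with rfl | hu
    · rcases hv with rfl | hv
      · exact absurd rfl huv
      · exact hcon v hv
    · rcases hv with rfl | hv
      · rw [dist_comm]; exact hcon u hu
      · exact hNsep u hu v hv huv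
  have := hNmax _ hins
  rw [Finset.card_insert_of_notMem htN] at this
  omega

lemma packing_lb {T : Type*} [PseudoMetricSpace T] {N : Finset T} {δ : ℝ}
    (hsep : ∀ u ∈ N, ∀ v ∈ N, u ≠ v → δ < dist u v) {ε : ℝ} (hεδ : ε ≤ δ) :
    ENNReal.ofReal (Real.sqrt (Real.log (N.card : ℝ))) ≤ sqrtLogPacking T ε := by
  refine le_iSup_of_le N ?_
  rw [iSup_pos (fun u hu v hv huv => lt_of_le_of_lt hεδ (hsep u hu v hv huv))]

lemma lint_lb {s : Set ℝ} (hs : MeasurableSet s) {f : ℝ → ℝ≥0∞} {c : ℝ≥0∞}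
    (h : ∀ ε ∈ s, c ≤ f ε) : c * volume s ≤ ∫⁻ ε in s, f ε := by
  calc c * volume s = ∫⁻ _ in s, c := (setLIntegral_const _ _).symm
    _ ≤ ∫⁻ ε in s, f ε := by
        apply lintegral_mono_ae
        filter_upwards [ae_restrict_mem hs] with ε hε
        exact h ε hε

lemma sum_int_le (f : ℝ → ℝ≥0∞) (e : ℕ → ℝ) (hmono : ∀ k, e (k + 1) ≤ e k) (m : ℕ) :
    ∑ k ∈ Finset.range m, ∫⁻ x in Set.Ioc (e (k + 1)) (e k), f x
      ≤ ∫⁻ x in Set.Ioc (e m) (e 0), f x := by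
  have hle : ∀ n : ℕ, e n ≤ e 0 := by
    intro n
    induction n with
    | zero => exact le_rfl
    | succ k ihk => exact (hmono k).trans ihk
  induction m with
  | zero => simp
  | succ m ih =>
      rw [Finset.sum_range_succ]
      calc (∑ k ∈ Finset.range m, ∫⁻ x in Set.Ioc (e (k + 1)) (e k), f x)
            + ∫⁻ x in Set.Ioc (e (m + 1)) (e m), f x
          ≤ (∫⁻ x in Set.Ioc (e m) (e 0), f x) + ∫⁻ x in Set.Ioc (e (m + 1)) (e m), f x :=
            add_le_add ih le_rfl
        _ = ∫⁻ x in Set.Ioc (e (m + 1)) (e m) ∪ Set.Ioc (e m) (e 0), f x := by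
            rw [lintegral_union measurableSet_Ioc (Set.Ioc_disjoint_Ioc_of_le le_rfl), add_comm]
        _ = ∫⁻ x in Set.Ioc (e (m + 1)) (e 0), f x := by
            rw [Set.Ioc_union_Ioc_eq_Ioc (hmono m) (hle m)]

lemma psi2Norm_aux_le {Ω : Type*} [MeasurableSpace Ω] {μ : Measure Ω} {f : Ω → ℝ} {C : ℝ}
    (hC : 0 < C) (h : ∫⁻ ω, ENNReal.ofReal (Real.exp ((|f ω| / C) ^ 2) - 1) ∂μ ≤ 1) :
    psi2Norm μ f ≤ ENNReal.ofReal C :=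
  sInf_le ⟨C, ⟨hC, h⟩, rfl⟩

lemma psi2Norm_aux_zero_of_ae {Ω : Type*} [MeasurableSpace Ω] {μ : Measure Ω} {f : Ω → ℝ}
    (h : f =ᵐ[μ] 0) : psi2Norm μ f = 0 := by
  refine le_antisymm ?_ zero_le
  have hn : ∀ n : ℕ, psi2Norm μ f ≤ ENNReal.ofReal (1 / ((n : ℝ) + 1)) := by
    intro n
    refine psi2Norm_aux_le (by positivity) ?_
    have hz : ∫⁻ ω, ENNReal.ofReal (Real.exp ((|f ω| / (1 / ((n : ℝ) + 1))) ^ 2) - 1) ∂μ = 0 := by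
      rw [← lintegral_zero (μ := μ)]
      apply lintegral_congr_ae
      filter_upwards [h] with ω hω
      simp [hω]
    rw [hz]
    exact zero_le
  have htend : Filter.Tendsto (fun n : ℕ => ENNReal.ofReal (1 / ((n : ℝ) + 1)))
      Filter.atTop (nhds 0) := by
    have := ENNReal.tendsto_ofReal tendsto_one_div_add_atTop_nhds_zero_nat
    simpa using this
  exact ge_of_tendsto' htend hn

set_option maxHeartbeats 2000000 in
lemma finite_bound {Ωs T : Type*} [MeasurableSpace Ωs] [PseudoMetricSpace T]
    (μ : Measure Ωs) [IsProbabilityMeasure μ]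
    (hbdd : Bornology.IsBounded (Set.univ : Set T))
    (X : T → Ωs → ℝ) (hmeas : ∀ t, Measurable (X t))
    (hzero : ∀ s t : T, dist s t = 0 → ∀ᵐ ω ∂μ, X s ω = X t ω)
    (htail : ∀ s t : T, 0 < dist s t → ∀ z : ℝ, 0 < z →
      μ {ω | z < |X s ω - X t ω|}
        ≤ ENNReal.ofReal (2 * Real.exp (-z ^ 2 / (2 * (dist s t) ^ 2))))
    (F : Finset T) (hF : F.Nonempty) (hFF : (F ×ˢ F).Nonempty) :
    psi2Norm μ (fun ω => (F ×ˢ F).sup' hFF (fun p => |X p.1 ω - X p.2 ω|))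
      ≤ ENNReal.ofReal 200 *
          ∫⁻ ε in Set.Ioc (0 : ℝ) (Metric.diam (Set.univ : Set T)), sqrtLogPacking T ε := by
  classical
  set Δ := Metric.diam (Set.univ : Set T) with hΔdef
  set I := ∫⁻ ε in Set.Ioc (0 : ℝ) Δ, sqrtLogPacking T ε with hIdef
  set G : Ωs → ℝ := fun ω => (F ×ˢ F).sup' hFF (fun p => |X p.1 ω - X p.2 ω|) with hGdef
  have hG0 : ∀ ω, 0 ≤ G ω := fun ω =>
    le_trans (abs_nonneg (X hFF.choose.1 ω - X hFF.choose.2 ω))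
      (Finset.le_sup' (fun p => |X p.1 ω - X p.2 ω|) hFF.choose_spec)
  -- a.e. event: zero-distance pairs agree
  have hzeroF : ∀ᵐ ω ∂μ, ∀ p ∈ (F ×ˢ F : Finset (T × T)), dist p.1 p.2 = 0 →
      X p.1 ω = X p.2 ω := by
    have h1 : ∀ᵐ ω ∂μ, ∀ p : {x // x ∈ F ×ˢ F}, dist p.1.1 p.1.2 = 0 →
        X p.1.1 ω = X p.1.2 ω := by
      rw [ae_all_iff]
      intro p
      by_cases h0 : dist p.1.1 p.1.2 = 0
      · filter_upwards [hzero p.1.1 p.1.2 h0] with ω hω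
        intro _
        exact hω
      · exact Filter.Eventually.of_forall fun ω h => absurd h h0
    filter_upwards [h1] with ω hω
    intro p hp hd
    exact hω ⟨p, hp⟩ hd
  by_cases hdeg : ∀ s ∈ F, ∀ t ∈ F, dist s t = 0
  · -- degenerate case: G = 0 a.e.
    have hGz : G =ᵐ[μ] 0 := by
      filter_upwards [hzeroF] with ω hω
      have hle : G ω ≤ 0 := by
        apply Finset.sup'_le
        intro p hp
        obtain ⟨h1, h2⟩ := Finset.mem_product.1 hp
        rw [hω p hp (hdeg p.1 h1 p.2 h2), sub_self, abs_zero]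
      exact le_antisymm hle (hG0 ω)
    rw [hGdef] at hGz ⊢
    rw [psi2Norm_aux_zero_of_ae hGz]
    exact zero_le
  · push_neg at hdeg
    obtain ⟨s₀, hs₀, t₀', ht₀', hd0⟩ := hdeg
    have hd0' : 0 < dist s₀ t₀' := lt_of_le_of_ne dist_nonneg (Ne.symm hd0)
    have hΔpos : 0 < Δ :=
      lt_of_lt_of_le hd0' (Metric.dist_le_diam_of_mem hbdd (Set.mem_univ _) (Set.mem_univ _))
    -- minimal positive distance on F
    set D : Finset (T × T) := (F ×ˢ F).filter (fun p => 0 < dist p.1 p.2) with hDdef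
    have hD : D.Nonempty :=
      ⟨(s₀, t₀'), Finset.mem_filter.2 ⟨Finset.mem_product.2 ⟨hs₀, ht₀'⟩, hd0'⟩⟩
    set V : Finset ℝ := D.image (fun p => dist p.1 p.2) with hVdef
    have hV : V.Nonempty := hD.image _
    set δ := V.min' hV with hδdef
    have hδpos : 0 < δ := by
      obtain ⟨q, hqD, hqd⟩ := Finset.mem_image.1 (V.min'_mem hV)
      have h2 := (Finset.mem_filter.1 hqD).2
      rw [hqd] at h2
      exact h2
    have hδΔ : δ ≤ Δ := by
      obtain ⟨q, hqD, hqd⟩ := Finset.mem_image.1 (V.min'_mem hV)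
      have h2 : dist q.1 q.2 ≤ Δ :=
        Metric.dist_le_diam_of_mem hbdd (Set.mem_univ _) (Set.mem_univ _)
      rw [hqd] at h2
      exact h2
    have hδle : ∀ s ∈ F, ∀ t ∈ F, 0 < dist s t → δ ≤ dist s t := by
      intro s hs t ht hpos
      apply V.min'_le
      exact Finset.mem_image.2 ⟨(s, t), Finset.mem_filter.2
        ⟨Finset.mem_product.2 ⟨hs, ht⟩, hpos⟩, rfl⟩
    -- the scales
    set e : ℕ → ℝ := fun k => Δ * (1 / 2) ^ k with hedef
    have he_pos : ∀ k, 0 < e k := fun k => by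
      rw [hedef]; positivity
    have he_db : ∀ k, e k = 2 * e (k + 1) := fun k => by
      rw [hedef]; simp only [pow_succ]; ring
    have he_succ : ∀ k, e (k + 1) ≤ e k := fun k => by
      rw [he_db k]; linarith [he_pos (k + 1)]
    have he0 : e 0 = Δ := by rw [hedef]; simp
    obtain ⟨m, hm⟩ : ∃ m : ℕ, e m < δ := by
      obtain ⟨n, hn⟩ := exists_pow_lt_of_lt_one (div_pos hδpos hΔpos)
        (by norm_num : (1 / 2 : ℝ) < 1)
      refine ⟨n, ?_⟩
      rw [hedef]
      calc Δ * (1 / 2) ^ n < Δ * (δ / Δ) := by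
            apply mul_lt_mul_of_pos_left hn hΔpos
        _ = δ := by field_simp
    have hm0 : m ≠ 0 := by
      intro h
      rw [h, he0] at hm
      linarith
    -- nets
    have hnets := fun k : ℕ => exists_net F hF (he_pos k)
    choose N hNF hNne hNsep hNnet using hnets
    have hN0 : ∀ u ∈ N 0, ∀ v ∈ N 0, u = v := by
      intro u hu v hv
      by_contra huv
      have h1 := hNsep 0 u hu v hv huv
      have h2 : dist u v ≤ Δ :=
        Metric.dist_le_diam_of_mem hbdd (Set.mem_univ _) (Set.mem_univ _)
      rw [he0] at h1
      linarith
    -- projections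
    have hprex : ∀ k : ℕ, ∀ t ∈ F, ∃ u, u ∈ N k ∧ dist t u ≤ e k := by
      intro k t ht
      obtain ⟨u, hu1, hu2⟩ := hNnet k t ht
      exact ⟨u, hu1, hu2⟩
    set pr : ℕ → T → T := fun k t => if h : t ∈ F then (hprex k t h).choose else t with hprdef
    have hprmem : ∀ k, ∀ t ∈ F, pr k t ∈ N k := by
      intro k t ht
      rw [hprdef]
      simp only [dif_pos ht]
      exact (hprex k t ht).choose_spec.1
    have hprdist : ∀ k, ∀ t ∈ F, dist t (pr k t) ≤ e k := by
      intro k t ht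
      rw [hprdef]
      simp only [dif_pos ht]
      exact (hprex k t ht).choose_spec.2
    -- pairs at level k (connecting N (k+1) to N k)
    set P : ℕ → Finset (T × T) := fun k =>
      ((N (k + 1)) ×ˢ (N k)).filter (fun p => dist p.1 p.2 ≤ 3 * e (k + 1)) with hPdef
    have hPsubF : ∀ k, ∀ p ∈ P k, p.1 ∈ F ∧ p.2 ∈ F := by
      intro k p hp
      obtain ⟨hp1, hp2⟩ := Finset.mem_product.1 (Finset.mem_filter.1 hp).1
      exact ⟨hNF (k + 1) hp1, hNF k hp2⟩
    have hPmem : ∀ k, ∀ t ∈ F, (pr (k + 1) t, pr k t) ∈ P k := by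
      intro k t ht
      refine Finset.mem_filter.2 ⟨Finset.mem_product.2 ⟨hprmem (k + 1) t ht, hprmem k t ht⟩, ?_⟩
      calc dist (pr (k + 1) t) (pr k t) ≤ dist (pr (k + 1) t) t + dist t (pr k t) :=
            dist_triangle _ _ _
        _ ≤ e (k + 1) + e k := by
            refine add_le_add ?_ (hprdist k t ht)
            rw [dist_comm]
            exact hprdist (k + 1) t ht
        _ = 3 * e (k + 1) := by rw [he_db k]; ring
    have hPdist : ∀ k, ∀ p ∈ P k, dist p.1 p.2 ≤ 3 * e (k + 1) := by
      intro k p hp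
      exact (Finset.mem_filter.1 hp).2
    obtain ⟨a₀, ha₀⟩ := hF
    have hPne : ∀ k, (P k).Nonempty := fun k => ⟨_, hPmem k a₀ ha₀⟩
    -- the level maxima
    set M : ℕ → Ωs → ℝ := fun k ω => (P k).sup' (hPne k) (fun p => |X p.1 ω - X p.2 ω|)
      with hMdef
    have hMmeas : ∀ k, Measurable (M k) := fun k =>
      measurable_finset_sup' (hPne k) _ (fun p => ((hmeas p.1).sub (hmeas p.2)).abs)
    have hM0 : ∀ k ω, 0 ≤ M k ω := fun k ω =>
      le_trans (abs_nonneg (X (hPne k).choose.1 ω - X (hPne k).choose.2 ω))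
        (Finset.le_sup' (fun p => |X p.1 ω - X p.2 ω|) (hPne k).choose_spec)
    -- tail bound for the level maxima
    set β : ℕ → ℝ := fun k => 1 / (2 * (3 * e (k + 1)) ^ 2) with hβdef
    have hβpos : ∀ k, 0 < β k := fun k => by
      have := he_pos (k + 1)
      rw [hβdef]
      positivity
    set A : ℕ → ℝ := fun k => 2 * ((P k).card : ℝ) with hAdef
    have hcard1 : ∀ k, 1 ≤ ((P k).card : ℝ) := fun k => by
      have : 0 < (P k).card := Finset.card_pos.2 (hPne k)
      exact_mod_cast this
    have hA1 : ∀ k, 1 ≤ A k := fun k => by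
      have h := hcard1 k
      calc (1:ℝ) ≤ ((P k).card : ℝ) := h
        _ ≤ 2 * ((P k).card : ℝ) := by linarith
        _ = A k := rfl
    have hMtail : ∀ k, ∀ z : ℝ, 0 < z →
        μ {ω | z < |M k ω|} ≤ ENNReal.ofReal (A k * Real.exp (-β k * z ^ 2)) := by
      intro k z hz
      have hpair : ∀ p ∈ P k, μ {ω | z < |X p.1 ω - X p.2 ω|}
          ≤ ENNReal.ofReal (2 * Real.exp (-β k * z ^ 2)) := by
        intro p hp
        rcases (dist_nonneg : (0:ℝ) ≤ dist p.1 p.2).lt_or_eq with hdp | hdp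
        · refine (htail p.1 p.2 hdp z hz).trans ?_
          apply ENNReal.ofReal_le_ofReal
          have h3e : dist p.1 p.2 ≤ 3 * e (k + 1) := hPdist k p hp
          have h3e' : 0 < 3 * e (k + 1) := by linarith [he_pos (k + 1)]
          have hmono : -z ^ 2 / (2 * dist p.1 p.2 ^ 2) ≤ -β k * z ^ 2 := by
            rw [hβdef]
            rw [neg_div, neg_mul, neg_le_neg_iff]
            rw [div_mul_eq_mul_div, one_mul]
            apply div_le_div_of_nonneg_left (by positivity) (by positivity)
            nlinarith [hdp, h3e]
          have := Real.exp_le_exp.2 hmono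
          nlinarith [this]
        · have hnull : μ {ω | ¬ X p.1 ω = X p.2 ω} = 0 := ae_iff.1 (hzero p.1 p.2 hdp.symm)
          have hsub : {ω | z < |X p.1 ω - X p.2 ω|} ⊆ {ω | X p.1 ω ≠ X p.2 ω} := by
            intro ω hω
            simp only [Set.mem_setOf_eq] at hω ⊢
            intro heq
            rw [heq, sub_self, abs_zero] at hω
            linarith
          rw [measure_mono_null hsub hnull]
          exact zero_le
      calc μ {ω | z < |M k ω|}
          ≤ μ (⋃ p ∈ P k, {ω | z < |X p.1 ω - X p.2 ω|}) := by
            apply measure_mono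
            intro ω hω
            simp only [Set.mem_setOf_eq] at hω
            rw [abs_of_nonneg (hM0 k ω)] at hω
            obtain ⟨p, hp, hlt⟩ := (Finset.lt_sup'_iff (hPne k)).1 hω
            exact Set.mem_iUnion₂.2 ⟨p, hp, hlt⟩
        _ ≤ ∑ p ∈ P k, μ {ω | z < |X p.1 ω - X p.2 ω|} := measure_biUnion_finset_le _ _
        _ ≤ ∑ _p ∈ P k, ENNReal.ofReal (2 * Real.exp (-β k * z ^ 2)) :=
            Finset.sum_le_sum hpair
        _ = ((P k).card : ℝ≥0∞) * ENNReal.ofReal (2 * Real.exp (-β k * z ^ 2)) := by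
            rw [Finset.sum_const, nsmul_eq_mul]
        _ = ENNReal.ofReal (A k * Real.exp (-β k * z ^ 2)) := by
            rw [← ENNReal.ofReal_natCast ((P k).card),
              ← ENNReal.ofReal_mul (Nat.cast_nonneg _)]
            congr 1
            rw [hAdef]
            ring
    -- psi2 bound for each level maximum
    set Cc : ℕ → ℝ := fun k => 2 * Real.sqrt ((1 + Real.log (A k)) / β k) with hCcdef
    have hargpos : ∀ k, 0 < (1 + Real.log (A k)) / β k := fun k =>
      div_pos (by linarith [Real.log_nonneg (hA1 k)]) (hβpos k)
    have hCcpos : ∀ k, 0 < Cc k := fun k => by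
      rw [hCcdef]
      exact mul_pos two_pos (Real.sqrt_pos.2 (hargpos k))
    have hCcint : ∀ k, ∫⁻ ω, ENNReal.ofReal (Real.exp ((M k ω / Cc k) ^ 2) - 1) ∂μ ≤ 1 := by
      intro k
      have h := tail_to_psi2 μ (M k) (hMmeas k) (hA1 k) (hβpos k) (hMtail k)
      calc ∫⁻ ω, ENNReal.ofReal (Real.exp ((M k ω / Cc k) ^ 2) - 1) ∂μ
          = ∫⁻ ω, ENNReal.ofReal
              (Real.exp ((|M k ω| / (2 * Real.sqrt ((1 + Real.log (A k)) / β k))) ^ 2) - 1) ∂μ := by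
            apply lintegral_congr
            intro ω
            rw [abs_of_nonneg (hM0 k ω), hCcdef]
        _ ≤ 1 := h
    -- sum the levels
    have hMsum := psi2_sum μ (Finset.nonempty_range_iff.2 hm0) (fun k => M k) Cc
      hMmeas hM0 hCcpos (fun k _ => hCcint k)
    set SC := ∑ k ∈ Finset.range m, Cc k with hSCdef
    have hSCpos : 0 < SC :=
      Finset.sum_pos (fun k _ => hCcpos k) (Finset.nonempty_range_iff.2 hm0)
    -- almost-sure chaining bound
    have hdom : ∀ᵐ ω ∂μ, G ω ≤ 2 * ∑ k ∈ Finset.range m, M k ω := by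
      filter_upwards [hzeroF] with ω hω
      have hchain : ∀ t ∈ F, |X t ω - X (pr 0 t) ω| ≤ ∑ k ∈ Finset.range m, M k ω := by
        intro t ht
        have h1 : X t ω = X (pr m t) ω := by
          apply hω (t, pr m t)
            (Finset.mem_product.2 ⟨ht, hNF m (hprmem m t ht)⟩)
          have hd := hprdist m t ht
          by_contra hne
          have hpos : 0 < dist t (pr m t) := lt_of_le_of_ne dist_nonneg (Ne.symm hne)
          have := hδle t ht (pr m t) (hNF m (hprmem m t ht)) hpos
          linarith
        have h2 : ∑ k ∈ Finset.range m, (X (pr (k + 1) t) ω - X (pr k t) ω)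
            = X (pr m t) ω - X (pr 0 t) ω := Finset.sum_range_sub (fun k => X (pr k t) ω) m
        calc |X t ω - X (pr 0 t) ω|
            = |∑ k ∈ Finset.range m, (X (pr (k + 1) t) ω - X (pr k t) ω)| := by
              rw [h2, h1]
          _ ≤ ∑ k ∈ Finset.range m, |X (pr (k + 1) t) ω - X (pr k t) ω| :=
              Finset.abs_sum_le_sum_abs _ _
          _ ≤ ∑ k ∈ Finset.range m, M k ω := by
              apply Finset.sum_le_sum
              intro k _
              exact Finset.le_sup' (fun p => |X p.1 ω - X p.2 ω|) (hPmem k t ht)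
      apply Finset.sup'_le
      intro p hp
      obtain ⟨hp1, hp2⟩ := Finset.mem_product.1 hp
      have hprpr : pr 0 p.1 = pr 0 p.2 := hN0 _ (hprmem 0 p.1 hp1) _ (hprmem 0 p.2 hp2)
      have hc1 := hchain p.1 hp1
      have hc2 := hchain p.2 hp2
      calc |X p.1 ω - X p.2 ω|
          ≤ |X p.1 ω - X (pr 0 p.1) ω| + |X p.2 ω - X (pr 0 p.2) ω| := by
            rw [hprpr]
            have := abs_sub_le (X p.1 ω) (X (pr 0 p.2) ω) (X p.2 ω)
            rw [abs_sub_comm (X (pr 0 p.2) ω) (X p.2 ω)] at this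
            exact this
        _ ≤ 2 * ∑ k ∈ Finset.range m, M k ω := by linarith
    -- psi2 bound for G
    have hGint : ∫⁻ ω, ENNReal.ofReal (Real.exp ((|G ω| / (2 * SC)) ^ 2) - 1) ∂μ ≤ 1 := by
      refine le_trans (lintegral_mono_ae ?_) hMsum
      filter_upwards [hdom] with ω hω
      apply ENNReal.ofReal_le_ofReal
      apply sub_le_sub_right
      apply Real.exp_le_exp.2
      have hSM : 0 ≤ ∑ k ∈ Finset.range m, M k ω :=
        Finset.sum_nonneg fun k _ => hM0 k ω
      have hle : |G ω| / (2 * SC) ≤ (∑ k ∈ Finset.range m, M k ω) / SC := by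
        rw [abs_of_nonneg (hG0 ω), div_le_div_iff₀ (by positivity) hSCpos]
        nlinarith
      exact pow_le_pow_left₀ (by positivity) hle 2
    have hpsi : psi2Norm μ G ≤ ENNReal.ofReal (2 * SC) :=
      psi2Norm_aux_le (by positivity) hGint
    -- entropy quantities
    set ln : ℕ → ℝ := fun k => Real.sqrt (Real.log ((N k).card : ℝ)) with hlndef
    have hln0 : ∀ k, 0 ≤ ln k := fun k => Real.sqrt_nonneg _
    have hNcard1 : ∀ k, 1 ≤ ((N k).card : ℝ) := fun k => by
      have : 0 < (N k).card := Finset.card_pos.2 (hNne k)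
      exact_mod_cast this
    have hlogN0 : ∀ k, 0 ≤ Real.log ((N k).card : ℝ) := fun k => Real.log_nonneg (hNcard1 k)
    -- numeric bound on the level constants
    have hCcle : ∀ k, Cc k ≤ 13 * e (k + 1) + 9 * e (k + 1) * ln (k + 1) + 9 * e (k + 1) * ln k := by
      intro k
      have hep := he_pos (k + 1)
      have hlogA0 : 0 ≤ Real.log (A k) := Real.log_nonneg (hA1 k)
      have harg : (1 + Real.log (A k)) / β k = 18 * e (k + 1) ^ 2 * (1 + Real.log (A k)) := by
        rw [hβdef]
        field_simp
        ring
      have hsqrt18 : Real.sqrt 18 ≤ 4.25 := by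
        calc Real.sqrt 18 ≤ Real.sqrt (4.25 ^ 2) := Real.sqrt_le_sqrt (by norm_num)
          _ = 4.25 := Real.sqrt_sq (by norm_num)
      have hsqrt2 : Real.sqrt 2 ≤ 1.5 := by
        calc Real.sqrt 2 ≤ Real.sqrt (1.5 ^ 2) := Real.sqrt_le_sqrt (by norm_num)
          _ = 1.5 := Real.sqrt_sq (by norm_num)
      have hsplit : Real.sqrt (18 * e (k + 1) ^ 2 * (1 + Real.log (A k)))
          = Real.sqrt 18 * e (k + 1) * Real.sqrt (1 + Real.log (A k)) := by
        rw [Real.sqrt_mul (by positivity), Real.sqrt_mul (by norm_num : (0:ℝ) ≤ 18),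
          Real.sqrt_sq hep.le]
      have hlogA : Real.log (A k)
          ≤ 1 + Real.log ((N (k + 1)).card : ℝ) + Real.log ((N k).card : ℝ) := by
        have hPcard : ((P k).card : ℝ) ≤ ((N (k + 1)).card : ℝ) * ((N k).card : ℝ) := by
          have h1 : (P k).card ≤ (N (k + 1) ×ˢ N k).card := Finset.card_filter_le _ _
          rw [Finset.card_product] at h1
          exact_mod_cast h1
        have hlog2 : Real.log 2 ≤ 1 := by linarith [Real.log_two_lt_d9]
        calc Real.log (A k) = Real.log 2 + Real.log ((P k).card : ℝ) := by
              rw [hAdef]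
              exact Real.log_mul (by norm_num) (ne_of_gt (by linarith [hcard1 k]))
          _ ≤ Real.log 2 + Real.log (((N (k + 1)).card : ℝ) * ((N k).card : ℝ)) := by
              have := Real.log_le_log (by linarith [hcard1 k]) hPcard
              linarith
          _ = Real.log 2 + (Real.log ((N (k + 1)).card : ℝ) + Real.log ((N k).card : ℝ)) := by
              rw [Real.log_mul (ne_of_gt (by linarith [hNcard1 (k + 1)]))
                (ne_of_gt (by linarith [hNcard1 k]))]
          _ ≤ 1 + Real.log ((N (k + 1)).card : ℝ) + Real.log ((N k).card : ℝ) := by linarith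
      have hsq : Real.sqrt (1 + Real.log (A k)) ≤ Real.sqrt 2 + (ln (k + 1) + ln k) := by
        calc Real.sqrt (1 + Real.log (A k))
            ≤ Real.sqrt (2 + (Real.log ((N (k + 1)).card : ℝ) + Real.log ((N k).card : ℝ))) :=
              Real.sqrt_le_sqrt (by linarith)
          _ ≤ Real.sqrt 2
              + Real.sqrt (Real.log ((N (k + 1)).card : ℝ) + Real.log ((N k).card : ℝ)) :=
              sqrt_add_le' _ _ (by norm_num) (by linarith [hlogN0 k, hlogN0 (k + 1)])
          _ ≤ Real.sqrt 2 + (ln (k + 1) + ln k) := by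
              have := sqrt_add_le' _ _ (hlogN0 (k + 1)) (hlogN0 k)
              linarith
      have hCc2 : Cc k = 2 * (Real.sqrt 18 * e (k + 1) * Real.sqrt (1 + Real.log (A k))) := by
        calc Cc k = 2 * Real.sqrt ((1 + Real.log (A k)) / β k) := rfl
          _ = 2 * (Real.sqrt 18 * e (k + 1) * Real.sqrt (1 + Real.log (A k))) := by
              rw [harg, hsplit]
      rw [hCc2]
      have hs1p : 0 ≤ Real.sqrt (1 + Real.log (A k)) := Real.sqrt_nonneg _
      have h18p : 0 ≤ Real.sqrt 18 := Real.sqrt_nonneg _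
      have k2 : e (k + 1) * Real.sqrt (1 + Real.log (A k))
          ≤ e (k + 1) * (Real.sqrt 2 + (ln (k + 1) + ln k)) :=
        mul_le_mul_of_nonneg_left hsq hep.le
      have k1 : Real.sqrt 18 * (e (k + 1) * Real.sqrt (1 + Real.log (A k)))
          ≤ 4.25 * (e (k + 1) * Real.sqrt (1 + Real.log (A k))) :=
        mul_le_mul_of_nonneg_right hsqrt18 (mul_nonneg hep.le hs1p)
      have k3 : 4.25 * (e (k + 1) * Real.sqrt (1 + Real.log (A k)))
          ≤ 4.25 * (e (k + 1) * (Real.sqrt 2 + (ln (k + 1) + ln k))) :=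
        mul_le_mul_of_nonneg_left k2 (by norm_num)
      have k4 : e (k + 1) * Real.sqrt 2 ≤ e (k + 1) * 1.5 :=
        mul_le_mul_of_nonneg_left hsqrt2 hep.le
      nlinarith [k1, k3, k4, hln0 k, hln0 (k + 1), hep]
    -- interval lower bounds for the entropy integral
    have hkey1 : ∀ k : ℕ, ENNReal.ofReal (e (k + 1) * ln k)
        ≤ ∫⁻ x in Set.Ioc (e (k + 1)) (e k), sqrtLogPacking T x := by
      intro k
      have hvol : volume (Set.Ioc (e (k + 1)) (e k)) = ENNReal.ofReal (e (k + 1)) := by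
        rw [Real.volume_Ioc]
        congr 1
        rw [he_db k]
        ring
      calc ENNReal.ofReal (e (k + 1) * ln k)
          = ENNReal.ofReal (ln k) * volume (Set.Ioc (e (k + 1)) (e k)) := by
            rw [hvol, ← ENNReal.ofReal_mul (hln0 k), mul_comm]
        _ ≤ ∫⁻ x in Set.Ioc (e (k + 1)) (e k), sqrtLogPacking T x :=
            lint_lb measurableSet_Ioc (fun ε hε => packing_lb (hNsep k) hε.2)
    have hkey2 : ∀ mm : ℕ,
        (∑ k ∈ Finset.range mm, ENNReal.ofReal (e (k + 1) * ln k)) ≤ I := by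
      intro mm
      calc ∑ k ∈ Finset.range mm, ENNReal.ofReal (e (k + 1) * ln k)
          ≤ ∑ k ∈ Finset.range mm, ∫⁻ x in Set.Ioc (e (k + 1)) (e k), sqrtLogPacking T x :=
            Finset.sum_le_sum fun k _ => hkey1 k
        _ ≤ ∫⁻ x in Set.Ioc (e mm) (e 0), sqrtLogPacking T x :=
            sum_int_le _ e he_succ mm
        _ ≤ I := by
            apply lintegral_mono_set
            rw [he0]
            exact Set.Ioc_subset_Ioc (he_pos mm).le le_rfl
    -- diameter versus entropy integral
    have hdiam : ENNReal.ofReal Δ ≤ ENNReal.ofReal 5 * I := by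
      have hpair : ∀ ε : ℝ, ε ∈ Set.Ioc (Δ / 4) (Δ / 2) →
          ENNReal.ofReal (Real.sqrt (Real.log 2)) ≤ sqrtLogPacking T ε := by
        intro ε hε
        obtain ⟨hε1, hε2⟩ := hε
        have hε0 : (0:ℝ) < ε := lt_of_le_of_lt (by linarith) hε1
        have hexists : ∃ s t : T, ε < dist s t := by
          by_contra hcon
          push_neg at hcon
          have hd := Metric.diam_le_of_forall_dist_le hε0.le
            (fun s (_ : s ∈ (Set.univ : Set T)) t _ => hcon s t)
          have : Δ ≤ ε := hd
          linarith
        obtain ⟨s, t, hst⟩ := hexists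
        have hsne : s ≠ t := by
          intro h
          rw [h, dist_self] at hst
          linarith
        classical
        have hsep2 : ∀ u ∈ ({s, t} : Finset T), ∀ v ∈ ({s, t} : Finset T),
            u ≠ v → ε < dist u v := by
          intro u hu v hv huv
          simp only [Finset.mem_insert, Finset.mem_singleton] at hu hv
          rcases hu with rfl | rfl <;> rcases hv with rfl | rfl
          · exact absurd rfl huv
          · exact hst
          · rw [dist_comm]; exact hst
          · exact absurd rfl huv
        have hcard : ((({s, t} : Finset T).card : ℝ)) = 2 := by
          rw [Finset.card_insert_of_notMem (by simpa using hsne), Finset.card_singleton]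
          norm_num
        have hpl := packing_lb (N := ({s, t} : Finset T)) (δ := ε) hsep2 le_rfl
        rwa [hcard] at hpl
      have hIlb : ENNReal.ofReal (Real.sqrt (Real.log 2)) * ENNReal.ofReal (Δ / 4) ≤ I := by
        have h1 := lint_lb measurableSet_Ioc hpair
        rw [Real.volume_Ioc, show Δ / 2 - Δ / 4 = Δ / 4 by ring] at h1
        refine h1.trans ?_
        apply lintegral_mono_set
        apply Set.Ioc_subset_Ioc <;> linarith
      have hsl2 : (0.8:ℝ) ≤ Real.sqrt (Real.log 2) := by
        rw [Real.le_sqrt' (by norm_num)]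
        nlinarith [Real.log_two_gt_d9]
      calc ENNReal.ofReal Δ
          ≤ ENNReal.ofReal (5 * (Real.sqrt (Real.log 2) * (Δ / 4))) := by
            apply ENNReal.ofReal_le_ofReal
            nlinarith [hsl2, hΔpos]
        _ = ENNReal.ofReal 5
              * (ENNReal.ofReal (Real.sqrt (Real.log 2)) * ENNReal.ofReal (Δ / 4)) := by
            rw [← ENNReal.ofReal_mul (Real.sqrt_nonneg _), ← ENNReal.ofReal_mul (by norm_num)]
        _ ≤ ENNReal.ofReal 5 * I := mul_le_mul_right hIlb _
    -- final assembly
    refine hpsi.trans ?_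
    have hsum_e : ∑ k ∈ Finset.range m, e (k + 1) ≤ Δ := by
      have hgeom : ∀ n : ℕ, ∑ k ∈ Finset.range n, (1 / 2 : ℝ) ^ (k + 1) = 1 - (1 / 2) ^ n := by
        intro n
        induction n with
        | zero => simp
        | succ n ih =>
            rw [Finset.sum_range_succ, ih]
            ring
      calc ∑ k ∈ Finset.range m, e (k + 1)
          = Δ * ∑ k ∈ Finset.range m, (1 / 2 : ℝ) ^ (k + 1) := by
            rw [Finset.mul_sum]
        _ = Δ * (1 - (1 / 2) ^ m) := by rw [hgeom]
        _ ≤ Δ := by nlinarith [pow_pos (by norm_num : (0:ℝ) < 1 / 2) m, hΔpos]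
    have h1 : (∑ k ∈ Finset.range m, ENNReal.ofReal (26 * e (k + 1)))
        ≤ ENNReal.ofReal 130 * I := by
      calc ∑ k ∈ Finset.range m, ENNReal.ofReal (26 * e (k + 1))
          = ENNReal.ofReal (∑ k ∈ Finset.range m, 26 * e (k + 1)) :=
            (ENNReal.ofReal_sum_of_nonneg (fun k _ => by linarith [he_pos (k + 1)])).symm
        _ ≤ ENNReal.ofReal (26 * Δ) := by
            apply ENNReal.ofReal_le_ofReal
            rw [← Finset.mul_sum]
            nlinarith [hsum_e]
        _ = ENNReal.ofReal 26 * ENNReal.ofReal Δ := by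
            rw [← ENNReal.ofReal_mul (by norm_num)]
        _ ≤ ENNReal.ofReal 26 * (ENNReal.ofReal 5 * I) := mul_le_mul_right hdiam _
        _ = ENNReal.ofReal 130 * I := by
            rw [← mul_assoc, ← ENNReal.ofReal_mul (by norm_num)]
            norm_num
    have h2 : (∑ k ∈ Finset.range m, ENNReal.ofReal (18 * e (k + 1) * ln (k + 1)))
        ≤ ENNReal.ofReal 36 * I := by
      calc ∑ k ∈ Finset.range m, ENNReal.ofReal (18 * e (k + 1) * ln (k + 1))
          = ∑ k ∈ Finset.range m, ENNReal.ofReal 36 * ENNReal.ofReal (e (k + 2) * ln (k + 1)) := by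
            apply Finset.sum_congr rfl
            intro k _
            rw [← ENNReal.ofReal_mul (by norm_num)]
            congr 1
            rw [he_db (k + 1)]
            ring
        _ = ENNReal.ofReal 36 * ∑ k ∈ Finset.range m, ENNReal.ofReal (e (k + 2) * ln (k + 1)) := by
            rw [Finset.mul_sum]
        _ ≤ ENNReal.ofReal 36 * ∑ k ∈ Finset.range (m + 1), ENNReal.ofReal (e (k + 1) * ln k) := by
            apply mul_le_mul_right
            rw [Finset.sum_range_succ' (fun k => ENNReal.ofReal (e (k + 1) * ln k)) m]
            exact le_add_right le_rfl
        _ ≤ ENNReal.ofReal 36 * I := mul_le_mul_right (hkey2 (m + 1)) _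
    have h3 : (∑ k ∈ Finset.range m, ENNReal.ofReal (18 * e (k + 1) * ln k))
        ≤ ENNReal.ofReal 18 * I := by
      calc ∑ k ∈ Finset.range m, ENNReal.ofReal (18 * e (k + 1) * ln k)
          = ∑ k ∈ Finset.range m, ENNReal.ofReal 18 * ENNReal.ofReal (e (k + 1) * ln k) := by
            apply Finset.sum_congr rfl
            intro k _
            rw [← ENNReal.ofReal_mul (by norm_num)]
            congr 1
            ring
        _ = ENNReal.ofReal 18 * ∑ k ∈ Finset.range m, ENNReal.ofReal (e (k + 1) * ln k) := by
            rw [Finset.mul_sum]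
        _ ≤ ENNReal.ofReal 18 * I := mul_le_mul_right (hkey2 m) _
    calc ENNReal.ofReal (2 * SC)
        ≤ ∑ k ∈ Finset.range m, (ENNReal.ofReal (26 * e (k + 1))
            + ENNReal.ofReal (18 * e (k + 1) * ln (k + 1))
            + ENNReal.ofReal (18 * e (k + 1) * ln k)) := by
          calc ENNReal.ofReal (2 * SC)
              = ∑ k ∈ Finset.range m, ENNReal.ofReal (2 * Cc k) := by
                rw [hSCdef, Finset.mul_sum]
                exact ENNReal.ofReal_sum_of_nonneg (fun k _ => by linarith [hCcpos k])
            _ ≤ _ := by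
                apply Finset.sum_le_sum
                intro k _
                rw [← ENNReal.ofReal_add (by positivity) (by nlinarith [he_pos (k+1), hln0 (k+1)]),
                  ← ENNReal.ofReal_add
                    (by nlinarith [he_pos (k+1), hln0 (k+1)])
                    (by nlinarith [he_pos (k+1), hln0 k])]
                apply ENNReal.ofReal_le_ofReal
                have := hCcle k
                linarith
      _ = (∑ k ∈ Finset.range m, ENNReal.ofReal (26 * e (k + 1)))
            + (∑ k ∈ Finset.range m, ENNReal.ofReal (18 * e (k + 1) * ln (k + 1)))
            + (∑ k ∈ Finset.range m, ENNReal.ofReal (18 * e (k + 1) * ln k)) := by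
          rw [Finset.sum_add_distrib, Finset.sum_add_distrib]
      _ ≤ ENNReal.ofReal 130 * I + ENNReal.ofReal 36 * I + ENNReal.ofReal 18 * I :=
          add_le_add (add_le_add h1 h2) h3
      _ ≤ ENNReal.ofReal 200 * I := by
          rw [← add_mul, ← add_mul, ← ENNReal.ofReal_add (by norm_num) (by norm_num),
            ← ENNReal.ofReal_add (by norm_num) (by norm_num)]
          apply mul_le_mul_left
          apply ENNReal.ofReal_le_ofReal
          norm_num
set_option maxHeartbeats 2000000 in
lemma countable_bound {Ωs T : Type*} [MeasurableSpace Ωs] [PseudoMetricSpace T]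
    [Countable T] [Nonempty T]
    (μ : Measure Ωs) [IsProbabilityMeasure μ]
    (hbdd : Bornology.IsBounded (Set.univ : Set T))
    (X : T → Ωs → ℝ) (hmeas : ∀ t, Measurable (X t))
    (hzero : ∀ s t : T, dist s t = 0 → ∀ᵐ ω ∂μ, X s ω = X t ω)
    (htail : ∀ s t : T, 0 < dist s t → ∀ z : ℝ, 0 < z →
      μ {ω | z < |X s ω - X t ω|}
        ≤ ENNReal.ofReal (2 * Real.exp (-z ^ 2 / (2 * (dist s t) ^ 2)))) :
    psi2Norm μ (fun ω => ⨆ (s : T) (t : T), |X s ω - X t ω|)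
      ≤ ENNReal.ofReal 200 *
          ∫⁻ ε in Set.Ioc (0 : ℝ) (Metric.diam (Set.univ : Set T)), sqrtLogPacking T ε := by
  classical
  set R := ENNReal.ofReal 200 *
    ∫⁻ ε in Set.Ioc (0 : ℝ) (Metric.diam (Set.univ : Set T)), sqrtLogPacking T ε with hRdef
  set f : Ωs → ℝ := fun ω => ⨆ (s : T) (t : T), |X s ω - X t ω| with hfdef
  have hf0 : ∀ ω, 0 ≤ f ω := fun ω =>
    Real.iSup_nonneg fun s => Real.iSup_nonneg fun t => abs_nonneg _
  obtain ⟨en, hen⟩ := exists_surjective_nat T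
  set F : ℕ → Finset T := fun n => (Finset.range (n + 1)).image en with hFdef
  have hFne : ∀ n, (F n).Nonempty := fun n =>
    (Finset.nonempty_range_iff.2 (Nat.succ_ne_zero n)).image en
  have hFFne : ∀ n, ((F n) ×ˢ (F n)).Nonempty := fun n => (hFne n).product (hFne n)
  have hFmono : ∀ a b : ℕ, a ≤ b → F a ⊆ F b := fun a b hab =>
    Finset.image_subset_image (Finset.range_subset_range.2 (by omega))
  have hmemF : ∀ t : T, ∃ n, ∀ k, n ≤ k → t ∈ F k := by
    intro t
    obtain ⟨n, rfl⟩ := hen t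
    exact ⟨n, fun k hk => Finset.mem_image.2 ⟨n, Finset.mem_range.2 (by omega), rfl⟩⟩
  set g : ℕ → Ωs → ℝ := fun n ω =>
    ((F n) ×ˢ (F n)).sup' (hFFne n) (fun p => |X p.1 ω - X p.2 ω|) with hgdef
  have hg0 : ∀ n ω, 0 ≤ g n ω := fun n ω =>
    le_trans (abs_nonneg (X (hFFne n).choose.1 ω - X (hFFne n).choose.2 ω))
      (Finset.le_sup' (fun p => |X p.1 ω - X p.2 ω|) (hFFne n).choose_spec)
  have hgmono : ∀ ω, Monotone fun n => g n ω := by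
    intro ω n1 n2 h
    apply Finset.sup'_le
    intro p hp
    obtain ⟨hp1, hp2⟩ := Finset.mem_product.1 hp
    exact Finset.le_sup' (fun p => |X p.1 ω - X p.2 ω|)
      (Finset.mem_product.2 ⟨hFmono n1 n2 h hp1, hFmono n1 n2 h hp2⟩)
  have hgmeas : ∀ n, Measurable (g n) := fun n =>
    measurable_finset_sup' (hFFne n) _ (fun p => ((hmeas p.1).sub (hmeas p.2)).abs)
  have hbound : ∀ n, psi2Norm μ (g n) ≤ R := fun n =>
    finite_bound μ hbdd X hmeas hzero htail (F n) (hFne n) (hFFne n)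
  -- main claim for finite D above R
  have hmain : ∀ D : ℝ≥0∞, R < D → D ≠ ⊤ → psi2Norm μ f ≤ D := by
    intro D hRD hDtop
    set c := D.toReal with hcdef
    have hc0 : 0 < c :=
      ENNReal.toReal_pos (ne_of_gt (lt_of_le_of_lt (zero_le : 0 ≤ R) hRD)) hDtop
    have hD : D = ENNReal.ofReal c := (ENNReal.ofReal_toReal hDtop).symm
    have hCn : ∀ n, ∫⁻ ω, ENNReal.ofReal (Real.exp ((g n ω / c) ^ 2) - 1) ∂μ ≤ 1 := by
      intro n
      have h := lt_of_le_of_lt (hbound n) hRD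
      rw [psi2Norm] at h
      obtain ⟨x, hx, hxD⟩ := sInf_lt_iff.1 h
      obtain ⟨C0, ⟨hC0pos, hC0int⟩, rfl⟩ := hx
      have hC0c : C0 ≤ c := by
        rw [hD] at hxD
        exact ((ENNReal.ofReal_lt_ofReal_iff hc0).1 hxD).le
      refine le_trans (lintegral_mono fun ω => ?_) hC0int
      apply ENNReal.ofReal_le_ofReal
      apply sub_le_sub_right
      apply Real.exp_le_exp.2
      apply pow_le_pow_left₀ (div_nonneg (hg0 n ω) hc0.le)
      rw [abs_of_nonneg (hg0 n ω)]
      rw [div_le_div_iff₀ hc0 hC0pos]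
      nlinarith [hg0 n ω, hC0c, hC0pos, hc0]
    -- pointwise supremum control
    have hpt : ∀ ω, ENNReal.ofReal (Real.exp ((|f ω| / c) ^ 2) - 1)
        ≤ ⨆ n, ENNReal.ofReal (Real.exp ((g n ω / c) ^ 2) - 1) := by
      intro ω
      by_cases hb : BddAbove (Set.range fun n => g n ω)
      · set B := ⨆ n, g n ω with hBdef
        have hB0 : 0 ≤ B := le_trans (hg0 0 ω) (le_ciSup hb 0)
        have hfB : f ω ≤ B := by
          rw [hfdef]
          apply Real.iSup_le _ hB0
          intro s
          apply Real.iSup_le _ hB0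
          intro t
          obtain ⟨ns, hns⟩ := hmemF s
          obtain ⟨nt, hnt⟩ := hmemF t
          set n := max ns nt
          have hsF : s ∈ F n := hns n (le_max_left _ _)
          have htF : t ∈ F n := hnt n (le_max_right _ _)
          calc |X s ω - X t ω| ≤ g n ω := by
                rw [hgdef]
                have hmem : (s, t) ∈ (F n) ×ˢ (F n) := Finset.mem_product.2 ⟨hsF, htF⟩
                exact Finset.le_sup' (fun p => |X p.1 ω - X p.2 ω|) hmem
            _ ≤ B := le_ciSup hb n
        have htend : Filter.Tendsto (fun n => g n ω) Filter.atTop (nhds B) :=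
          tendsto_atTop_ciSup (hgmono ω) hb
        have hcont : Continuous (fun x : ℝ => ENNReal.ofReal (Real.exp ((x / c) ^ 2) - 1)) := by
          apply ENNReal.continuous_ofReal.comp
          exact (Real.continuous_exp.comp ((continuous_id.div_const c).pow 2)).sub
            continuous_const
        have h2 : Filter.Tendsto (fun n => ENNReal.ofReal (Real.exp ((g n ω / c) ^ 2) - 1))
            Filter.atTop (nhds (ENNReal.ofReal (Real.exp ((B / c) ^ 2) - 1))) :=
          (hcont.tendsto B).comp htend
        have h3 : ENNReal.ofReal (Real.exp ((B / c) ^ 2) - 1)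
            ≤ ⨆ n, ENNReal.ofReal (Real.exp ((g n ω / c) ^ 2) - 1) :=
          le_of_tendsto h2 (Filter.Eventually.of_forall fun n =>
            le_iSup (fun n => ENNReal.ofReal (Real.exp ((g n ω / c) ^ 2) - 1)) n)
        refine le_trans ?_ h3
        apply ENNReal.ofReal_le_ofReal
        apply sub_le_sub_right
        apply Real.exp_le_exp.2
        apply pow_le_pow_left₀ (div_nonneg (abs_nonneg _) hc0.le)
        rw [abs_of_nonneg (hf0 ω)]
        gcongr
      · have htop : (⨆ n, ENNReal.ofReal (Real.exp ((g n ω / c) ^ 2) - 1)) = ⊤ := by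
          rw [iSup_eq_top]
          intro b hb'
          have hMv0 : 0 ≤ b.toReal := ENNReal.toReal_nonneg
          obtain ⟨y, ⟨n, rfl⟩, hy⟩ := not_bddAbove_iff.1 hb (c * Real.sqrt (b.toReal + 1))
          refine ⟨n, ?_⟩
          have hgc : Real.sqrt (b.toReal + 1) < g n ω / c := by
            rw [lt_div_iff₀ hc0]
            linarith [hy]
          have hsq : b.toReal + 1 < (g n ω / c) ^ 2 := by
            have h0 : 0 ≤ Real.sqrt (b.toReal + 1) := Real.sqrt_nonneg _
            calc b.toReal + 1 = Real.sqrt (b.toReal + 1) ^ 2 := (Real.sq_sqrt (by linarith)).symm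
              _ < (g n ω / c) ^ 2 := by nlinarith [hgc, h0]
          have hexp : b.toReal < Real.exp ((g n ω / c) ^ 2) - 1 := by
            have := Real.add_one_le_exp ((g n ω / c) ^ 2)
            linarith
          calc b = ENNReal.ofReal b.toReal := (ENNReal.ofReal_toReal hb'.ne).symm
            _ < ENNReal.ofReal (Real.exp ((g n ω / c) ^ 2) - 1) :=
              (ENNReal.ofReal_lt_ofReal_iff (by linarith)).2 hexp
        rw [htop]
        exact le_top
    -- integrate
    have hfin : ∫⁻ ω, ENNReal.ofReal (Real.exp ((|f ω| / c) ^ 2) - 1) ∂μ ≤ 1 := by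
      calc ∫⁻ ω, ENNReal.ofReal (Real.exp ((|f ω| / c) ^ 2) - 1) ∂μ
          ≤ ∫⁻ ω, ⨆ n, ENNReal.ofReal (Real.exp ((g n ω / c) ^ 2) - 1) ∂μ :=
            lintegral_mono hpt
        _ = ⨆ n, ∫⁻ ω, ENNReal.ofReal (Real.exp ((g n ω / c) ^ 2) - 1) ∂μ := by
            apply lintegral_iSup
            · intro n
              exact ENNReal.measurable_ofReal.comp
                ((Real.measurable_exp.comp (((hgmeas n).div_const c).pow_const 2)).sub
                  measurable_const)
            · intro n1 n2 h ω
              apply ENNReal.ofReal_le_ofReal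
              apply sub_le_sub_right
              apply Real.exp_le_exp.2
              apply pow_le_pow_left₀ (div_nonneg (hg0 n1 ω) hc0.le)
              gcongr
              exact hgmono ω h
        _ ≤ 1 := iSup_le fun n => hCn n
    rw [hD]
    exact psi2Norm_aux_le hc0 hfin
  by_cases hR : R = ⊤
  · rw [hRdef] at hR ⊢
    rw [hR]
    exact le_top
  · refine ENNReal.le_of_forall_pos_le_add fun ε hε hRtop => ?_
    refine hmain (R + ε) ?_ ?_
    · exact ENNReal.lt_add_right hR (by exact_mod_cast hε.ne')
    · exact ENNReal.add_ne_top.2 ⟨hR, ENNReal.coe_ne_top⟩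

/-- **maximal inequality / Dudley entropy bound.** There is an absolute
constant `K > 0` such that for every probability space, every countable pseudometric index
set `T` of finite diameter and every separable sub-Gaussian process `{X_t : t ∈ T}`
(`X_s = X_t` a.s. when `d(s,t) = 0`, and
`P(|X_s − X_t| > z) ≤ 2 exp(−z²/(2 d(s,t)²))` when `d(s,t) > 0`), one has
`‖sup_{s,t} |X_s − X_t|‖_{ψ₂} ≤ K ∫₀^{diam T} √(log D(ε, T, d)) dε`,
the integral being `+∞` if the integrand fails to be integrable. -/
theorem maximal_inequality_subGaussian :
    ∃ K : ℝ, 0 < K ∧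
      ∀ (Ωs : Type u) (T : Type v) [MeasurableSpace Ωs] [PseudoMetricSpace T] [Countable T]
        (μ : Measure Ωs), IsProbabilityMeasure μ →
        Bornology.IsBounded (Set.univ : Set T) →
        ∀ X : T → Ωs → ℝ, (∀ t, Measurable (X t)) →
        (∀ s t : T, dist s t = 0 → ∀ᵐ ω ∂μ, X s ω = X t ω) →
        (∀ s t : T, 0 < dist s t → ∀ z : ℝ, 0 < z →
          μ {ω | z < |X s ω - X t ω|}
            ≤ ENNReal.ofReal (2 * Real.exp (-z ^ 2 / (2 * (dist s t) ^ 2)))) →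
        psi2Norm μ (fun ω => ⨆ (s : T) (t : T), |X s ω - X t ω|)
          ≤ ENNReal.ofReal K *
              ∫⁻ ε in Set.Ioc (0 : ℝ) (Metric.diam (Set.univ : Set T)),
                sqrtLogPacking T ε := by
  refine ⟨200, by norm_num, ?_⟩
  intro Ωs T mΩ pT cT μ hprob hbdd X hmeas hzero htail
  haveI := hprob
  rcases isEmpty_or_nonempty T with hT | hT
  · have hf : (fun ω : Ωs => ⨆ (s : T) (t : T), |X s ω - X t ω|) = fun _ => (0 : ℝ) := by
      funext ω
      exact Real.iSup_of_isEmpty _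
    rw [hf, psi2Norm_aux_zero_of_ae (f := fun _ : Ωs => (0 : ℝ))
      (Filter.Eventually.of_forall fun ω => rfl)]
    exact zero_le
  · exact countable_bound μ hbdd X hmeas hzero htail
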